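/- Let n ≥ 2 and 2 ≤ m ≤ n with n − m even. Then Σ_{k ≡ n (mod 2)} C_m(n+1, k) = (n+m)(n+1−m)(n−1)! / (2·m!) + (n−1)!/(m−2)!, where the sum is over all k ≥ 1 with k congruent to n modulo 2. -/

import Mathlib

open Equiv Finset

noncomputable section

/-- The number of cycles of a permutation of `Fin n`, counting fixed points as cycles. -/
def cycleCount {n : ℕ} (σ : Equiv.Perm (Fin n)) : ℕ :=
  σ.cycleType.card + (Finset.univ.filter fun x => σ x = x).card

/-- A permutation of `Fin n` consisting of a single cycle of length `n`
(equivalently, having exactly one cycle, fixed points counting as cycles). -/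
def IsFullCycle {n : ℕ} (σ : Equiv.Perm (Fin n)) : Prop :=
  cycleCount σ = 1

/-- `σ` separates the first `m` elements (`1, …, m`, i.e. indices `0, …, m-1`):
they lie in pairwise distinct cycles of `σ`. -/
def Separates {n : ℕ} (m : ℕ) (σ : Equiv.Perm (Fin n)) : Prop :=
  ∀ i j : Fin n, (i : ℕ) < m → (j : ℕ) < m → i ≠ j → ¬ σ.SameCycle i j

/-- `C_m(N, k)`: the number of permutations of `[N]` with exactly `k` cycles
that separate the first `m` elements. -/
def sepCount (N m k : ℕ) : ℕ :=
  Nat.card {σ : Equiv.Perm (Fin N) // cycleCount σ = k ∧ Separates m σ}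

/-- `C(N, k)`: the signless Stirling number of the first kind, i.e. the number of
permutations of `[N]` with exactly `k` cycles (fixed points counting as cycles). -/
def stirlingCycle (N k : ℕ) : ℕ :=
  Nat.card {σ : Equiv.Perm (Fin N) // cycleCount σ = k}

open Equiv.Perm

set_option linter.unusedSectionVars false

variable {α : Type*} [Fintype α] [DecidableEq α]

noncomputable def orbCount (σ : Perm α) : ℕ :=
  Nat.card (Quotient (Equiv.Perm.SameCycle.setoid σ))

private def fwdAux (σ : Perm α) (x : α) :
    {c // c ∈ σ.cycleFactorsFinset} ⊕ {x // σ x = x} :=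
  if h : σ x = x then Sum.inr ⟨x, h⟩
  else Sum.inl ⟨σ.cycleOf x, cycleOf_mem_cycleFactorsFinset_iff.mpr (mem_support.mpr h)⟩

private theorem fwdAux_resp (σ : Perm α) : ∀ x y : α, σ.SameCycle x y →
    fwdAux σ x = fwdAux σ y := by
  intro x y hxy
  by_cases hx : σ x = x
  · have : y = x := by
      obtain ⟨i, hi⟩ := hxy
      rw [← hi, zpow_apply_eq_self_of_apply_eq_self hx]
    subst this; rfl
  · have hy : ¬ σ y = y := fun hy => hx ((hxy.apply_eq_self_iff).mpr hy)
    simp only [fwdAux, dif_neg hx, dif_neg hy]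
    congr 1
    exact Subtype.ext hxy.cycleOf_eq

theorem orbCount_eq (σ : Perm α) :
    orbCount σ = σ.cycleType.card + (Finset.univ.filter fun x => σ x = x).card := by
  classical
  have hct : σ.cycleType.card = σ.cycleFactorsFinset.card := by
    simp [Equiv.Perm.cycleType_def]
  rw [hct]
  have h1 : σ.cycleFactorsFinset.card = Nat.card {c // c ∈ σ.cycleFactorsFinset} := by
    simp [Nat.card_eq_fintype_card, Fintype.card_coe]
  have h2 : (Finset.univ.filter fun x => σ x = x).card = Nat.card {x // σ x = x} := by
    simp [Nat.card_eq_fintype_card, Fintype.card_subtype]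
  rw [h1, h2, ← Nat.card_sum]
  apply Nat.card_congr
  refine Equiv.ofBijective (Quotient.lift (fwdAux σ) (fwdAux_resp σ)) ⟨?_, ?_⟩
  · rintro ⟨x⟩ ⟨y⟩ hF
    apply Quotient.sound
    change σ.SameCycle x y
    change fwdAux σ x = fwdAux σ y at hF
    unfold fwdAux at hF
    split_ifs at hF with hx hy hy
    · obtain rfl : x = y := congrArg Subtype.val (Sum.inr.inj hF)
      exact Equiv.Perm.SameCycle.refl _ _
    · simp only [Sum.inl.injEq, Subtype.mk.injEq] at hF
      have hcc : σ.cycleOf x = σ.cycleOf y := hF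
      have hy' : y ∈ (σ.cycleOf x).support := by
        rw [hcc]
        exact mem_support_cycleOf_iff.mpr ⟨Equiv.Perm.SameCycle.refl _ _, mem_support.mpr hy⟩
      exact (mem_support_cycleOf_iff.mp hy').1
  · rintro (⟨c, hc⟩ | ⟨x, hx⟩)
    · have hc1 : c.IsCycle := (mem_cycleFactorsFinset_iff.mp hc).1
      obtain ⟨x, hx⟩ := hc1.nonempty_support
      have hxs : x ∈ σ.support := mem_cycleFactorsFinset_support_le hc hx
      refine ⟨Quotient.mk _ x, ?_⟩
      show fwdAux σ x = _
      simp only [fwdAux, dif_neg (mem_support.mp hxs)]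
      congr 1
      exact Subtype.ext (cycle_is_cycleOf hx hc).symm
    · exact ⟨Quotient.mk _ x, by simp only [fwdAux, Quotient.lift_mk, dif_pos hx]⟩

private theorem tau_step (σ : Perm α) (p : Option α) (x : α) :
    (swap none p * σ.optionCongr) (some x) = some (σ x) ∨
      ((swap none p * σ.optionCongr) (some x) = none ∧
        (swap none p * σ.optionCongr) none = some (σ x)) := by
  have h1 : (swap none p * σ.optionCongr) (some x) = swap none p (some (σ x)) := by
    simp [Perm.mul_apply]
  by_cases hp : some (σ x) = p
  · right
    constructor
    · rw [h1, hp, swap_apply_right]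
    · have h2 : (swap none p * σ.optionCongr) none = swap none p none := by
        simp [Perm.mul_apply]
      rw [h2, swap_apply_left, ← hp]
  · left
    rw [h1, swap_apply_of_ne_of_ne (by simp) hp]

private theorem tau_key1 (σ : Perm α) (p : Option α) :
    ∀ k : ℕ, ∀ i j : α, ((swap none p * σ.optionCongr) ^ k) (some i) = some j →
      σ.SameCycle i j := by
  intro k
  induction k using Nat.strong_induction_on with
  | _ k IH =>
    match k with
    | 0 => intro i j h; simp at h; subst h; exact Equiv.Perm.SameCycle.refl _ _
    | (k + 1) =>
      intro i j h
      rw [pow_succ, Perm.mul_apply] at h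
      rcases tau_step σ p i with hs | ⟨hs1, hs2⟩
      · rw [hs] at h
        exact sameCycle_apply_left.mp (IH k (Nat.lt_succ_self k) _ _ h)
      · rw [hs1] at h
        match k with
        | 0 => simp at h
        | (k' + 1) =>
          rw [pow_succ, Perm.mul_apply, hs2] at h
          exact sameCycle_apply_left.mp
            (IH k' (by omega) _ _ h)

private theorem tau_key2 (σ : Perm α) (p : Option α) :
    ∀ k : ℕ, ∀ i : α, ∃ k' : ℕ,
      ((swap none p * σ.optionCongr) ^ k') (some i) = some ((σ ^ k) i) := by
  intro k
  induction k with
  | zero => intro i; exact ⟨0, by simp⟩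
  | succ k IH =>
    intro i
    obtain ⟨k', hk'⟩ := IH i
    have hσ : (σ ^ (k + 1)) i = σ ((σ ^ k) i) := by
      rw [pow_succ', Perm.mul_apply]
    rcases tau_step σ p ((σ ^ k) i) with hs | ⟨hs1, hs2⟩
    · refine ⟨k' + 1, ?_⟩
      have happ : ∀ x, ((swap none p * σ.optionCongr) ^ (k' + 1)) x =
          (swap none p * σ.optionCongr) (((swap none p * σ.optionCongr) ^ k') x) := by
        intro x; rw [pow_succ']; rfl
      rw [happ, hk', hs, hσ]
    · refine ⟨k' + 2, ?_⟩
      have h2 : (swap none p * σ.optionCongr) ^ (k' + 2) =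
          (swap none p * σ.optionCongr) * ((swap none p * σ.optionCongr) * ((swap none p * σ.optionCongr) ^ k')) := by
        group
      have happ : ∀ x, ((swap none p * σ.optionCongr) ^ (k' + 2)) x =
          (swap none p * σ.optionCongr) ((swap none p * σ.optionCongr)
            (((swap none p * σ.optionCongr) ^ k') x)) := by
        intro x; rw [h2]; rfl
      rw [happ, hk', hs1, hs2, hσ]

private theorem tau_sameCycle_some (σ : Perm α) (p : Option α) (i j : α) :
    (swap none p * σ.optionCongr).SameCycle (some i) (some j) ↔ σ.SameCycle i j := by
  constructor
  · intro h
    obtain ⟨k, -, hk⟩ := h.exists_pow_eq'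
    exact tau_key1 σ p k i j hk
  · intro h
    obtain ⟨k, -, hk⟩ := h.exists_pow_eq'
    obtain ⟨k', hk'⟩ := tau_key2 σ p k i
    exact ⟨(k' : ℤ), by rw [zpow_natCast, hk', hk]⟩

private theorem orbCount_congr {β : Type*} [Fintype β] [DecidableEq β]
    (σ : Perm α) (τ : Perm β) (f : α → β)
    (h1 : ∀ x y, σ.SameCycle x y ↔ τ.SameCycle (f x) (f y))
    (h2 : ∀ b, ∃ a, τ.SameCycle (f a) b) : orbCount σ = orbCount τ := by
  apply Nat.card_congr
  refine Equiv.ofBijective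
    (Quotient.lift (fun x => (Quotient.mk (Equiv.Perm.SameCycle.setoid τ) (f x)))
      (fun x y hxy => Quotient.sound ((h1 x y).mp hxy))) ⟨?_, ?_⟩
  · rintro ⟨x⟩ ⟨y⟩ h
    exact Quotient.sound ((h1 x y).mpr (Quotient.exact h))
  · rintro ⟨b⟩
    obtain ⟨a, ha⟩ := h2 b
    exact ⟨Quotient.mk _ a, Quotient.sound ha⟩

private theorem sameCycle_tau_none (σ : Perm α) (a : α) :
    (swap none (some a) * σ.optionCongr).SameCycle none (some a) := by
  refine ⟨1, ?_⟩
  simp [Perm.mul_apply]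

private theorem swap_none_none_mul (σ : Perm α) :
    swap (none : Option α) none * σ.optionCongr = σ.optionCongr := by
  have h : (swap (none : Option α) none) = 1 := by
    rw [swap_self]; rfl
  rw [h, one_mul]

private theorem optionCongr_sameCycle_some (σ : Perm α) (i j : α) :
    Equiv.Perm.SameCycle σ.optionCongr (some i) (some j) ↔ σ.SameCycle i j := by
  rw [← swap_none_none_mul σ]
  exact tau_sameCycle_some σ none i j

private theorem optionCongr_not_sameCycle (σ : Perm α) (j : α) :
    ¬ Equiv.Perm.SameCycle σ.optionCongr none (some j) := by
  rintro ⟨z, hz⟩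
  rw [zpow_apply_eq_self_of_apply_eq_self (by simp)] at hz
  exact absurd hz (by simp)

private theorem orbCount_insert (σ : Perm α) (p : Option α) :
    orbCount (swap none p * σ.optionCongr) = orbCount σ + (if p = none then 1 else 0) := by
  cases p with
  | some a =>
    rw [if_neg (by simp), add_zero]
    refine (orbCount_congr σ _ some
      (fun x y => (tau_sameCycle_some σ (some a) x y).symm) ?_).symm
    rintro (_ | b)
    · exact ⟨a, (sameCycle_tau_none σ a).symm⟩
    · exact ⟨b, Equiv.Perm.SameCycle.refl _ _⟩
  | none =>
    rw [if_pos rfl, swap_none_none_mul]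
    have key : ∀ x y : Option α, Equiv.Perm.SameCycle σ.optionCongr x y →
        (Option.map (fun i => Quotient.mk (Equiv.Perm.SameCycle.setoid σ) i) x) =
        (Option.map (fun i => Quotient.mk (Equiv.Perm.SameCycle.setoid σ) i) y) := by
      rintro (_ | x) (_ | y) h
      · rfl
      · exact absurd h (optionCongr_not_sameCycle σ y)
      · exact absurd h.symm (optionCongr_not_sameCycle σ x)
      · simp only [Option.map_some]
        exact congrArg some (Quotient.sound ((optionCongr_sameCycle_some σ x y).mp h))
    have hcongr : Nat.card (Quotient (Equiv.Perm.SameCycle.setoid σ.optionCongr)) =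
        Nat.card (Option (Quotient (Equiv.Perm.SameCycle.setoid σ))) := by
      apply Nat.card_congr
      refine Equiv.ofBijective (Quotient.lift _ key) ⟨?_, ?_⟩
      · rintro ⟨(_ | x)⟩ ⟨(_ | y)⟩ h
        · exact Quotient.sound (Equiv.Perm.SameCycle.refl _ _)
        · exact absurd (h : none = some _) (by simp)
        · exact absurd (h : some _ = none) (by simp)
        · refine Quotient.sound ?_
          change Equiv.Perm.SameCycle σ.optionCongr (some x) (some y)
          rw [optionCongr_sameCycle_some]
          exact Quotient.exact (Option.some_injective _ (h : some _ = some _))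
      · rintro (_ | ⟨q⟩)
        · exact ⟨Quotient.mk _ none, rfl⟩
        · obtain ⟨i⟩ := q
          exact ⟨Quotient.mk _ (some i), rfl⟩
    rw [orbCount, hcongr, Nat.card_congr (Equiv.optionEquivSumPUnit (Quotient (Equiv.Perm.SameCycle.setoid σ)) : _ ≃ _ ⊕ PUnit.{1}), Nat.card_sum]
    simp [orbCount]

private theorem permCongr_zpow {β : Type*} (e : α ≃ β) (σ : Perm α) (z : ℤ) :
    (e.permCongr σ) ^ z = e.permCongr (σ ^ z) := by
  have hmul : ∀ f g : Perm α, e.permCongr (f * g) = e.permCongr f * e.permCongr g := by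
    intro f g; ext x; simp [Equiv.permCongr_apply, Perm.mul_apply]
  let F : Perm α →* Perm β := MonoidHom.mk' e.permCongr hmul
  exact (map_zpow F σ z).symm

private theorem permCongr_sameCycle {β : Type*} (e : α ≃ β) (σ : Perm α) (x y : α) :
    Equiv.Perm.SameCycle (e.permCongr σ) (e x) (e y) ↔ σ.SameCycle x y := by
  constructor
  · rintro ⟨z, hz⟩
    rw [permCongr_zpow] at hz
    simp only [Equiv.permCongr_apply, Equiv.symm_apply_apply] at hz
    exact ⟨z, e.injective hz⟩
  · rintro ⟨z, hz⟩
    refine ⟨z, ?_⟩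
    rw [permCongr_zpow]
    simp [Equiv.permCongr_apply, hz]

private theorem orbCount_permCongr {β : Type*} [Fintype β] [DecidableEq β]
    (e : α ≃ β) (σ : Perm α) : orbCount (e.permCongr σ) = orbCount σ := by
  refine (orbCount_congr σ _ e (fun x y => (permCongr_sameCycle e σ x y).symm) ?_).symm
  intro b
  refine ⟨e.symm b, ?_⟩
  rw [e.apply_symm_apply]

private theorem cycleCount_eq_orbCount {n : ℕ} (σ : Perm (Fin n)) :
    cycleCount σ = orbCount σ := (orbCount_eq σ).symm

private def insE (N : ℕ) : Perm (Fin (N + 1)) ≃ Option (Fin N) × Perm (Fin N) :=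
  (Equiv.permCongr (finSuccEquivLast)).trans Equiv.Perm.decomposeOption

private theorem insE_symm_apply (N : ℕ) (p : Option (Fin N)) (σ : Perm (Fin N)) :
    (insE N).symm (p, σ) =
      Equiv.permCongr finSuccEquivLast.symm (swap none p * σ.optionCongr) := by
  rfl

private theorem cycleCount_insE (N : ℕ) (p : Option (Fin N)) (σ : Perm (Fin N)) :
    cycleCount ((insE N).symm (p, σ)) = cycleCount σ + (if p = none then 1 else 0) := by
  rw [insE_symm_apply, cycleCount_eq_orbCount, cycleCount_eq_orbCount,
    orbCount_permCongr, orbCount_insert]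

private theorem sameCycle_insE (N : ℕ) (p : Option (Fin N)) (σ : Perm (Fin N))
    (i j : Fin N) :
    Equiv.Perm.SameCycle ((insE N).symm (p, σ)) (Fin.castSucc i) (Fin.castSucc j) ↔
      σ.SameCycle i j := by
  rw [insE_symm_apply]
  have hi : Fin.castSucc i = finSuccEquivLast.symm (some i) := by simp
  have hj : Fin.castSucc j = finSuccEquivLast.symm (some j) := by simp
  rw [hi, hj, permCongr_sameCycle, tau_sameCycle_some]

private theorem separates_insE (N m : ℕ) (hm : m ≤ N) (p : Option (Fin N))
    (σ : Perm (Fin N)) :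
    Separates m ((insE N).symm (p, σ)) ↔ Separates m σ := by
  constructor
  · intro hsep i j hi hj hne hsc
    exact hsep (Fin.castSucc i) (Fin.castSucc j) (by simpa using hi) (by simpa using hj)
      (fun h => hne (Fin.castSucc_inj.mp h)) ((sameCycle_insE N p σ i j).mpr hsc)
  · intro hsep i j hi hj hne hsc
    have hiN : (i : ℕ) < N := lt_of_lt_of_le hi hm
    have hjN : (j : ℕ) < N := lt_of_lt_of_le hj hm
    set i' : Fin N := ⟨i, hiN⟩
    set j' : Fin N := ⟨j, hjN⟩
    have hieq : i = Fin.castSucc i' := by simp [Fin.ext_iff, i']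
    have hjeq : j = Fin.castSucc j' := by simp [Fin.ext_iff, j']
    rw [hieq, hjeq, sameCycle_insE] at hsc
    exact hsep i' j' hi hj (fun h => hne (by rw [hieq, hjeq, h])) hsc

open scoped Classical

private theorem separates_self_iff {m : ℕ} (σ : Perm (Fin m)) : Separates m σ ↔ σ = 1 := by
  constructor
  · intro h
    ext i
    by_contra hne
    have hne' : σ i ≠ i := fun hh => hne (by simp [hh])
    exact h i (σ i) i.isLt (σ i).isLt (Ne.symm hne') ⟨1, by simp⟩
  · rintro rfl
    intro i j _ _ hne hsc
    exact hne (by simpa using hsc)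

private theorem cycleCount_one (N : ℕ) : cycleCount (1 : Perm (Fin N)) = N := by
  simp [cycleCount, Equiv.Perm.cycleType_one]

private noncomputable def sepSum (m N : ℕ) (x : ℚ) : ℚ :=
  ∑ σ : Perm (Fin N), if Separates m σ then x ^ cycleCount σ else 0

private theorem sepSum_base (m : ℕ) (x : ℚ) : sepSum m m x = x ^ m := by
  classical
  rw [sepSum]
  have : ∀ σ : Perm (Fin m), (if Separates m σ then x ^ cycleCount σ else 0) =
      (if σ = 1 then x ^ cycleCount σ else 0) := by
    intro σ
    simp only [separates_self_iff]
  simp_rw [this]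
  rw [Finset.sum_ite_eq' Finset.univ (1 : Perm (Fin m)) (fun σ => x ^ cycleCount σ)]
  simp [cycleCount_one]

private theorem sepSum_succ (m N : ℕ) (hm : m ≤ N) (x : ℚ) :
    sepSum m (N + 1) x = (x + N) * sepSum m N x := by
  classical
  rw [sepSum, ← Equiv.sum_comp (insE N).symm, Fintype.sum_prod_type, Fintype.sum_option]
  have hnone : ∀ σ : Perm (Fin N),
      (if Separates m ((insE N).symm ((none : Option (Fin N)), σ)) then
        x ^ cycleCount ((insE N).symm ((none : Option (Fin N)), σ)) else 0) =
      x * (if Separates m σ then x ^ cycleCount σ else 0) := by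
    intro σ
    rw [separates_insE N m hm, cycleCount_insE]
    simp only [reduceIte]
    split_ifs
    · rw [pow_succ]; ring
    · exact (mul_zero x).symm
  have hsome : ∀ (a : Fin N) (σ : Perm (Fin N)),
      (if Separates m ((insE N).symm (some a, σ)) then
        x ^ cycleCount ((insE N).symm (some a, σ)) else 0) =
      (if Separates m σ then x ^ cycleCount σ else 0) := by
    intro a σ
    rw [separates_insE N m hm, cycleCount_insE]
    simp only [reduceCtorEq, if_false, add_zero]
  simp_rw [hnone, hsome]
  rw [← Finset.mul_sum, Finset.sum_const, Finset.card_univ, Fintype.card_fin, sepSum,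
    nsmul_eq_mul]
  ring

private theorem sepSum_eq (m N : ℕ) (hm : m ≤ N) (x : ℚ) :
    sepSum m N x = x ^ m * ∏ j ∈ Finset.Ico m N, (x + j) := by
  induction N, hm using Nat.le_induction with
  | base => rw [sepSum_base]; simp
  | succ N hmN IH =>
    rw [sepSum_succ m N hmN x, IH, Finset.prod_Ico_succ_top hmN]
    ring

private theorem cycleCount_mem (N : ℕ) (σ : Perm (Fin (N + 1))) :
    cycleCount σ ∈ Finset.Icc 1 (N + 1) := by
  rw [Finset.mem_Icc]
  constructor
  · by_cases hσ : σ = 1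
    · subst hσ
      rw [cycleCount_one]
      omega
    · have h1 : 1 ≤ σ.cycleType.card := by
        rcases Nat.eq_zero_or_pos σ.cycleType.card with h | h
        · exact absurd (Equiv.Perm.card_cycleType_eq_zero.mp h) hσ
        · exact h
      rw [cycleCount]
      omega
  · have h1 : σ.cycleType.card ≤ σ.cycleType.sum := by
      have := Multiset.card_nsmul_le_sum (s := σ.cycleType) (a := 1)
        (fun x hx => le_of_lt (lt_of_lt_of_le one_lt_two
          (Equiv.Perm.two_le_of_mem_cycleType hx)))
      simpa using this
    rw [Equiv.Perm.sum_cycleType] at h1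
    have h2 : (Finset.univ.filter fun x => ¬ σ x = x) = σ.support := by
      ext x
      simp [Equiv.Perm.mem_support]
    have h3 := Finset.card_filter_add_card_filter_not
      (s := (Finset.univ : Finset (Fin (N + 1)))) (p := fun x => σ x = x)
    rw [h2] at h3
    simp only [Finset.card_univ, Fintype.card_fin] at h3
    rw [cycleCount]
    omega

private theorem prod_one_add (m : ℕ) : ∀ N, m ≤ N →
    (m.factorial : ℚ) * ∏ j ∈ Finset.Ico m N, ((1 : ℚ) + j) = N.factorial := by
  intro N hN
  induction N, hN using Nat.le_induction with
  | base => simp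
  | succ N hmN IH =>
    rw [Finset.prod_Ico_succ_top hmN, ← mul_assoc, IH, Nat.factorial_succ]
    push_cast
    ring

private theorem prod_neg_one_add (m : ℕ) (hm2 : 2 ≤ m) : ∀ N, m ≤ N →
    ((m - 2).factorial : ℚ) * ∏ j ∈ Finset.Ico m N, ((-1 : ℚ) + j) =
      ((N - 2).factorial : ℚ) := by
  intro N hN
  induction N, hN using Nat.le_induction with
  | base => simp
  | succ N hmN IH =>
    rw [Finset.prod_Ico_succ_top hmN, ← mul_assoc, IH]
    obtain ⟨K, rfl⟩ : ∃ K, N = K + 2 := ⟨N - 2, by omega⟩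
    have : (K + 2 + 1 - 2) = (K + 2 - 2) + 1 := by omega
    rw [this]
    simp only [Nat.add_sub_cancel, Nat.factorial_succ]
    push_cast
    ring

private theorem parity_key (n : ℕ) : ∀ c : ℕ,
    (1 : ℚ) + (-1) ^ n * (-1) ^ c = if c % 2 = n % 2 then 2 else 0 := by
  intro c
  rw [← pow_add]
  rcases Nat.even_or_odd (n + c) with h | h
  · have hc : c % 2 = n % 2 := by
      rw [Nat.even_iff] at h
      omega
    rw [h.neg_one_pow, if_pos hc]
    norm_num
  · have hc : ¬ c % 2 = n % 2 := by
      rw [Nat.odd_iff] at h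
      omega
    rw [h.neg_one_pow, if_neg hc]
    norm_num

/-- For `n ≥ 2` and `2 ≤ m ≤ n` with `n - m` even:
`Σ_{k ≥ 1, k ≡ n (mod 2)} C_m(n+1, k) = (n+m)(n+1-m)(n-1)! / (2 m!) + (n-1)!/(m-2)!`,
the sum being finite since `C_m(n+1, k) = 0` for `k > n + 1` (so it may be truncated at
`k = n + 1`). -/
theorem sepCount_parity_sum_even (n m : ℕ) (hn : 2 ≤ n) (hm2 : 2 ≤ m) (hm : m ≤ n)
    (heven : Even (n - m)) :
    ((∑ k ∈ (Finset.Icc 1 (n + 1)).filter (fun k => k % 2 = n % 2),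
        sepCount (n + 1) m k : ℕ) : ℚ) =
      ((n + m : ℕ) : ℚ) * ((n + 1 - m : ℕ) : ℚ) * (Nat.factorial (n - 1) : ℚ) /
        (2 * (Nat.factorial m : ℚ)) +
      (Nat.factorial (n - 1) : ℚ) / (Nat.factorial (m - 2) : ℚ) := by
  classical
  set A : Finset (Perm (Fin (n + 1))) :=
    Finset.univ.filter (fun σ => Separates m σ ∧ cycleCount σ % 2 = n % 2) with hA
  -- Step 1 : the sum equals A.card
  have hstep1 : (∑ k ∈ (Finset.Icc 1 (n + 1)).filter (fun k => k % 2 = n % 2),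
      sepCount (n + 1) m k) = A.card := by
    have hfib : A.card = ∑ k ∈ (Finset.Icc 1 (n + 1)).filter (fun k => k % 2 = n % 2),
        (A.filter (fun σ => cycleCount σ = k)).card := by
      apply Finset.card_eq_sum_card_fiberwise
      intro σ hσ
      rw [hA, Finset.mem_coe, Finset.mem_filter] at hσ
      rw [Finset.mem_coe, Finset.mem_filter]
      exact ⟨cycleCount_mem n σ, hσ.2.2⟩
    rw [hfib]
    apply Finset.sum_congr rfl
    intro k hk
    rw [Finset.mem_filter] at hk
    have hAk : A.filter (fun σ => cycleCount σ = k) =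
        Finset.univ.filter (fun σ => cycleCount σ = k ∧ Separates m σ) := by
      ext σ
      rw [hA]
      simp only [Finset.mem_filter, Finset.mem_univ, true_and]
      constructor
      · rintro ⟨⟨hsep, -⟩, hc⟩
        exact ⟨hc, hsep⟩
      · rintro ⟨hc, hsep⟩
        exact ⟨⟨hsep, by rw [hc]; exact hk.2⟩, hc⟩
    rw [hAk, sepCount, Nat.card_eq_fintype_card, Fintype.card_subtype]
  -- Step 2 : 2 * A.card = sepSum 1 + (-1)^n * sepSum (-1)
  have hstep2 : 2 * (A.card : ℚ) =
      sepSum m (n + 1) 1 + (-1) ^ n * sepSum m (n + 1) (-1) := by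
    have hcard : (A.card : ℚ) =
        ∑ σ : Perm (Fin (n + 1)),
          if Separates m σ ∧ cycleCount σ % 2 = n % 2 then (1 : ℚ) else 0 := by
      rw [hA, Finset.card_filter]
      push_cast
      rfl
    rw [hcard, sepSum, sepSum, Finset.mul_sum, Finset.mul_sum, ← Finset.sum_add_distrib]
    apply Finset.sum_congr rfl
    intro σ _
    by_cases hsep : Separates m σ
    · rw [if_pos hsep, if_pos hsep]
      by_cases hpar : cycleCount σ % 2 = n % 2
      · rw [if_pos ⟨hsep, hpar⟩]
        have := parity_key n (cycleCount σ)
        rw [if_pos hpar] at this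
        rw [one_pow]
        linarith [this]
      · rw [if_neg (fun h => hpar h.2)]
        have := parity_key n (cycleCount σ)
        rw [if_neg hpar] at this
        rw [one_pow]
        linarith [this]
    · rw [if_neg (fun h => hsep h.1), if_neg hsep, if_neg hsep]
      ring
  -- Step 3 : evaluate
  have hmn1 : m ≤ n + 1 := by omega
  have hval1 : sepSum m (n + 1) 1 = ((n + 1).factorial : ℚ) / (m.factorial : ℚ) := by
    rw [sepSum_eq m (n + 1) hmn1, one_pow, one_mul]
    have := prod_one_add m (n + 1) hmn1
    field_simp
    linarith [this]
  have hval2 : sepSum m (n + 1) (-1) =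
      (-1 : ℚ) ^ m * (((n - 1).factorial : ℚ) / ((m - 2).factorial : ℚ)) := by
    rw [sepSum_eq m (n + 1) hmn1]
    have h := prod_neg_one_add m hm2 (n + 1) hmn1
    have hn1 : n + 1 - 2 = n - 1 := by omega
    rw [hn1] at h
    have hfac : ((m - 2).factorial : ℚ) ≠ 0 := Nat.cast_ne_zero.mpr (Nat.factorial_ne_zero _)
    field_simp
    rw [mul_comm, h]
  -- parity of n + m
  have hnm : (-1 : ℚ) ^ n * (-1 : ℚ) ^ m = 1 := by
    rw [← pow_add]
    obtain ⟨t, ht⟩ := heven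
    refine Even.neg_one_pow ⟨m + t, by omega⟩
  -- final arithmetic
  rw [hstep1]
  have hA2 : (A.card : ℚ) = (((n + 1).factorial : ℚ) / (m.factorial : ℚ)
      + ((n - 1).factorial : ℚ) / ((m - 2).factorial : ℚ)) / 2 := by
    rw [hval1, hval2, ← mul_assoc, hnm, one_mul] at hstep2
    linarith [hstep2]
  rw [hA2]
  obtain ⟨a, rfl⟩ : ∃ a, n = a + 1 := ⟨n - 1, by omega⟩
  obtain ⟨b, rfl⟩ : ∃ b, m = b + 2 := ⟨m - 2, by omega⟩
  have hba : b ≤ a := by omega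
  have hsub : ((a + 1 + 1 - (b + 2) : ℕ) : ℚ) = (a : ℚ) - (b : ℚ) := by
    have : (a + 1 + 1 - (b + 2) : ℕ) = a - b := by omega
    rw [this, Nat.cast_sub hba]
  simp only [Nat.add_sub_cancel, hsub]
  have hf1 : ((a + 1 + 1).factorial : ℚ) = ((a : ℚ) + 2) * ((a : ℚ) + 1) * (a.factorial : ℚ) := by
    rw [show a + 1 + 1 = (a + 1) + 1 from rfl, Nat.factorial_succ, Nat.factorial_succ]
    push_cast
    ring
  have hf2 : ((b + 2).factorial : ℚ) = ((b : ℚ) + 2) * ((b : ℚ) + 1) * (b.factorial : ℚ) := by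
    rw [show b + 2 = (b + 1) + 1 from rfl, Nat.factorial_succ, Nat.factorial_succ]
    push_cast
    ring
  have ha0 : (a.factorial : ℚ) ≠ 0 := Nat.cast_ne_zero.mpr (Nat.factorial_ne_zero _)
  have hb0 : (b.factorial : ℚ) ≠ 0 := Nat.cast_ne_zero.mpr (Nat.factorial_ne_zero _)
  rw [hf1, hf2]
  push_cast
  field_simp
  ring
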